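/- Let l be (M,m)-(restricted smooth, restricted strongly concave) on the sparse subdomain Ω_{2k}, with 0 < m ≤ M. Then for every pair of subsets S, T ⊆ [n] each of size at most k (with the maximizers β^(S) and β^(S∪T) assumed to exist), it holds that 2M · f_S(T) ≥ ‖∇l(β^(S))_T‖₂² ≥ 2m · f_S(T). -/

import Mathlib

open scoped BigOperators

noncomputable section

abbrev Euc (n : ℕ) := EuclideanSpace ℝ (Fin n)

/-- Number of nonzero coordinates (the ℓ₀ "norm"). -/
def norm0 {n : ℕ} (x : Euc n) : ℕ := (Finset.univ.filter fun i => x i ≠ 0).card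

/-- `l` is (M,m)-(restricted smooth, restricted strongly concave) on the sparse
subdomain `Ω_r`, with gradient `g`. -/
def IsRSCSM {n : ℕ} (l : Euc n → ℝ) (g : Euc n → Euc n) (M m : ℝ) (r : ℕ) : Prop :=
  ∀ x y : Euc n, norm0 x ≤ r → norm0 y ≤ r → norm0 (x - y) ≤ r →
    (l y - l x - (inner ℝ (g x) (y - x) : ℝ) ≤ -(m / 2) * ‖y - x‖ ^ 2) ∧
    (-(M / 2) * ‖y - x‖ ^ 2 ≤ l y - l x - (inner ℝ (g x) (y - x) : ℝ))

/-- `x` is supported in the index set `S`. -/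
def SuppIn {n : ℕ} (S : Finset (Fin n)) (x : Euc n) : Prop := ∀ i, i ∉ S → x i = 0

/-- The support selection function `f(S) = l(β^(S)) - l(0)`. -/
def fsel {n : ℕ} (l : Euc n → ℝ) (B : Finset (Fin n) → Euc n) (S : Finset (Fin n)) : ℝ :=
  l (B S) - l 0


lemma norm0_le_card {n : ℕ} {S : Finset (Fin n)} {x : Euc n} (h : SuppIn S x) :
    norm0 x ≤ S.card := by
  apply Finset.card_le_card
  intro i hi
  simp only [Finset.mem_filter] at hi
  by_contra hiS
  exact hi.2 (h i hiS)

lemma inner_eq_sum {n : ℕ} (x y : Euc n) : (inner ℝ x y : ℝ) = ∑ i, x i * y i := by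
  simp [PiLp.inner_apply, RCLike.inner_apply, conj_trivial, mul_comm]

lemma norm_sq_eq_sum {n : ℕ} (x : Euc n) : ‖x‖ ^ 2 = ∑ i, x i ^ 2 := by
  rw [EuclideanSpace.norm_eq, Real.sq_sqrt (by positivity)]
  simp [sq_abs]

lemma grad_zero {n : ℕ} (l : Euc n → ℝ) (g : Euc n → Euc n)
    (hgrad : ∀ x, HasGradientAt l (g x) x) (S : Finset (Fin n)) (β : Euc n)
    (hβ : SuppIn S β) (hmax : ∀ x, SuppIn S x → l x ≤ l β)
    {j : Fin n} (hj : j ∈ S) : g β j = 0 := by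
  set e : Euc n := EuclideanSpace.single j (1:ℝ) with he
  have hc : HasDerivAt (fun t : ℝ => β + t • e) e 0 := by
    simpa using ((hasDerivAt_id (0:ℝ)).smul_const e).const_add β
  have hφ : HasDerivAt (fun t : ℝ => l (β + t • e)) (g β j) 0 := by
    have hβ0 : HasFDerivAt l ((InnerProductSpace.toDual ℝ (Euc n)) (g β)) (β + (0:ℝ) • e) := by
      simpa using (hgrad β).hasFDerivAt
    have := hβ0.comp_hasDerivAt 0 hc
    simp [InnerProductSpace.toDual_apply_apply, he, real_inner_smul_right, EuclideanSpace.inner_single_right] at this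
    exact this
  have hmax' : IsLocalMax (fun t : ℝ => l (β + t • e)) 0 := by
    apply Filter.Eventually.of_forall
    intro t
    have hsupp : SuppIn S (β + t • e) := by
      intro i hi
      have : e i = 0 := by
        simp [he, EuclideanSpace.single_apply]
        intro h; exact absurd (h ▸ hj) hi
      simp [hβ i hi, this]
    simpa [hβ] using hmax _ hsupp
  exact hmax'.hasDerivAt_eq_zero hφ

set_option maxHeartbeats 1000000 in
theorem stmt1 {n k : ℕ} (l : Euc n → ℝ) (g : Euc n → Euc n) (M m : ℝ)
    (hm : 0 < m) (hmM : m ≤ M)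
    (hgrad : ∀ x, HasGradientAt l (g x) x)
    (hl : IsRSCSM l g M m (2 * k))
    (B : Finset (Fin n) → Euc n)
    (hB0 : B ∅ = 0)
    (hBsupp : ∀ S, SuppIn S (B S))
    (hBmax : ∀ S x, SuppIn S x → l x ≤ l (B S))
    (S T : Finset (Fin n)) (hS : S.card ≤ k) (hT : T.card ≤ k) :
    2 * M * (fsel l B (S ∪ T) - fsel l B S) ≥ ∑ j ∈ T, (g (B S) j) ^ 2 ∧
    ∑ j ∈ T, (g (B S) j) ^ 2 ≥ 2 * m * (fsel l B (S ∪ T) - fsel l B S) := by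
  have hM : 0 < M := lt_of_lt_of_le hm hmM
  set β := B S with hβdef
  set γ := B (S ∪ T) with hγdef
  set G := g β with hGdef
  set Sg : ℝ := ∑ j ∈ T, (G j) ^ 2 with hSgdef
  have hSgnonneg : 0 ≤ Sg := Finset.sum_nonneg fun j _ => sq_nonneg _
  have hfd : fsel l B (S ∪ T) - fsel l B S = l γ - l β := by
    simp only [fsel]; ring
  have hcardU : (S ∪ T).card ≤ 2 * k := by
    calc (S ∪ T).card ≤ S.card + T.card := Finset.card_union_le S T
    _ ≤ 2 * k := by omega
  have n0β : norm0 β ≤ 2 * k := le_trans (norm0_le_card (hBsupp S)) (by omega)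
  have n0γ : norm0 γ ≤ 2 * k := le_trans (norm0_le_card (hBsupp (S ∪ T))) hcardU
  -- Part 1 : smoothness
  have part1 : 2 * M * (fsel l B (S ∪ T) - fsel l B S) ≥ Sg := by
    set u : Euc n := WithLp.toLp 2 (fun j => if j ∈ T then G j / M else 0 : Fin n → ℝ) with hu
    have huT : SuppIn T u := by intro i hi; simp [hu, hi]
    set y : Euc n := β + u with hy
    have hyU : SuppIn (S ∪ T) y := by
      intro i hi
      rw [Finset.mem_union] at hi; push_neg at hi
      have h1 := (hBsupp S) i hi.1
      have h2 := huT i hi.2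
      simp only [hy, PiLp.add_apply]
      rw [hβdef, h1, h2, add_zero]
    have n0y : norm0 y ≤ 2 * k := le_trans (norm0_le_card hyU) hcardU
    have n0d : norm0 (β - y) ≤ 2 * k := by
      refine le_trans (norm0_le_card (S := T) ?_) (by omega)
      intro i hi
      have : u i = 0 := huT i hi
      simp [hy, this]
    have hyβ : y - β = u := by simp [hy]
    have hinner : (inner ℝ G (y - β) : ℝ) = Sg / M := by
      rw [hyβ, inner_eq_sum]
      rw [show ∑ i, G i * u i = ∑ i ∈ Finset.univ, (if i ∈ T then G i * (G i / M) else 0) by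
        apply Finset.sum_congr rfl; intro i _; by_cases hi : i ∈ T <;> simp [hu, hi]]
      rw [Finset.sum_ite_mem, Finset.univ_inter, hSgdef, Finset.sum_div]
      apply Finset.sum_congr rfl; intro i _; field_simp
    have hnorm : ‖y - β‖ ^ 2 = Sg / M ^ 2 := by
      rw [hyβ, norm_sq_eq_sum]
      rw [show ∑ i, u i ^ 2 = ∑ i ∈ Finset.univ, (if i ∈ T then G i ^ 2 / M ^ 2 else 0) by
        apply Finset.sum_congr rfl; intro i _; by_cases hi : i ∈ T <;> simp [hu, hi, div_pow]]
      rw [Finset.sum_ite_mem, Finset.univ_inter, hSgdef, Finset.sum_div]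
    have hineq := (hl β y n0β n0y n0d).2
    rw [hinner, hnorm] at hineq
    have hly : l y ≤ l γ := hBmax (S ∪ T) y hyU
    rw [hfd]
    have hMne : M ≠ 0 := ne_of_gt hM
    have heq : Sg / M - (M / 2) * (Sg / M ^ 2) = Sg / (2 * M) := by field_simp; ring
    have h1 : Sg / (2 * M) ≤ l γ - l β := by linarith
    rw [div_le_iff₀ (by positivity : (0:ℝ) < 2 * M)] at h1
    nlinarith
  -- Part 2 : strong concavity
  have hGS : ∀ j ∈ S, G j = 0 := fun j hj =>
    grad_zero l g hgrad S β (hBsupp S) (fun x hx => hBmax S x hx) hj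
  have part2 : Sg ≥ 2 * m * (fsel l B (S ∪ T) - fsel l B S) := by
    have n0d : norm0 (β - γ) ≤ 2 * k := by
      refine le_trans (norm0_le_card (S := S ∪ T) ?_) hcardU
      intro i hi
      rw [Finset.mem_union] at hi; push_neg at hi
      have h1 := (hBsupp S) i hi.1
      have h2 := (hBsupp (S ∪ T)) i (by rw [Finset.mem_union]; push_neg; exact hi)
      simp only [PiLp.sub_apply]
      have e1 : β i = 0 := h1
      have e2 : γ i = 0 := h2
      rw [e1, e2, sub_zero]
    have hineq := (hl β γ n0β n0γ n0d).1
    rw [inner_eq_sum, norm_sq_eq_sum] at hineq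
    simp only [PiLp.sub_apply, ← hGdef] at hineq
    have hbound : ∑ i, (G i * (γ i - β i)) - m / 2 * ∑ i, (γ i - β i) ^ 2
        ≤ Sg / (2 * m) := by
      rw [Finset.mul_sum, ← Finset.sum_sub_distrib]
      calc ∑ i, (G i * (γ i - β i) - m / 2 * (γ i - β i) ^ 2)
          ≤ ∑ i ∈ Finset.univ, (if i ∈ T then G i ^ 2 / (2 * m) else 0) := by
            apply Finset.sum_le_sum
            intro i _
            by_cases hiT : i ∈ T
            · simp only [hiT, if_true]
              rw [le_div_iff₀ (by positivity : (0:ℝ) < 2 * m)]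
              nlinarith [sq_nonneg (G i - m * (γ i - β i))]
            · simp only [hiT, if_false]
              by_cases hiS : i ∈ S
              · have := hGS i hiS
                rw [this]
                nlinarith [sq_nonneg (γ i - β i)]
              · have h1 := (hBsupp S) i hiS
                have h2 := (hBsupp (S ∪ T)) i (by
                  rw [Finset.mem_union]; push_neg; exact ⟨hiS, hiT⟩)
                have e1 : β i = 0 := by rw [hβdef]; exact h1
                have e2 : γ i = 0 := by rw [hγdef]; exact h2
                rw [e1, e2]
                norm_num
        _ = Sg / (2 * m) := by
            rw [Finset.sum_ite_mem, Finset.univ_inter, hSgdef, Finset.sum_div]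
    rw [hfd]
    have h2 : l γ - l β ≤ Sg / (2 * m) := by linarith
    rw [le_div_iff₀ (by positivity : (0:ℝ) < 2 * m)] at h2
    nlinarith
  exact ⟨part1, part2⟩
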